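/- Let μ and ν be probability measures on a Polish space (X, F) and let γ be a coupling of μ and ν. If there exists a measurable set S ∈ F such that γ((Sᶜ × X) \ Δ) = 0 and γ((X × S) \ Δ) = 0, then γ is a maximal coupling, i.e. γ(Δ) = 1 − ‖μ − ν‖_TV. -/

import Mathlib

open MeasureTheory Set

noncomputable def tvDist {X : Type*} [MeasurableSpace X] (μ ν : Measure X) : ℝ :=
  ⨆ A : {s : Set X // MeasurableSet s}, |(μ A.1).toReal - (ν A.1).toReal|

theorem stmt2 {X : Type*} [MeasurableSpace X]
    (hΔ : MeasurableSet {p : X × X | p.1 = p.2})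
    (μ ν : Measure X) [IsProbabilityMeasure μ] [IsProbabilityMeasure ν]
    (γ : Measure (X × X)) [IsProbabilityMeasure γ]
    (hγ1 : ∀ A : Set X, MeasurableSet A → γ (A ×ˢ univ) = μ A)
    (hγ2 : ∀ A : Set X, MeasurableSet A → γ (univ ×ˢ A) = ν A)
    (S : Set X) (hS : MeasurableSet S)
    (h1 : γ ((Sᶜ ×ˢ univ) \ {p : X × X | p.1 = p.2}) = 0)
    (h2 : γ ((univ ×ˢ S) \ {p : X × X | p.1 = p.2}) = 0) :
    (γ {p : X × X | p.1 = p.2}).toReal = 1 - tvDist μ ν := by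
  set Δ : Set (X × X) := {p : X × X | p.1 = p.2} with hΔdef
  -- Step A : γ Δ = μ Sᶜ + ν S
  have hA1 : γ ((Sᶜ ×ˢ (univ : Set X)) ∩ Δ) = μ Sᶜ := by
    have h := measure_inter_add_diff (μ := γ) (Sᶜ ×ˢ (univ : Set X)) hΔ
    rw [h1, add_zero] at h
    rw [h, hγ1 Sᶜ hS.compl]
  have hA2 : γ (((univ : Set X) ×ˢ S) ∩ Δ) = ν S := by
    have h := measure_inter_add_diff (μ := γ) ((univ : Set X) ×ˢ S) hΔ
    rw [h2, add_zero] at h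
    rw [h, hγ2 S hS]
  have hunion : Δ = ((Sᶜ ×ˢ (univ : Set X)) ∩ Δ) ∪ (((univ : Set X) ×ˢ S) ∩ Δ) := by
    ext ⟨x, y⟩
    simp only [hΔdef, Set.mem_setOf_eq, Set.mem_union, Set.mem_inter_iff, Set.mem_prod,
      Set.mem_univ, Set.mem_compl_iff, and_true, true_and]
    constructor
    · intro h
      by_cases hx : x ∈ S
      · exact Or.inr ⟨h ▸ hx, h⟩
      · exact Or.inl ⟨hx, h⟩
    · rintro (⟨_, h⟩ | ⟨_, h⟩) <;> exact h
  have hdisj : Disjoint ((Sᶜ ×ˢ (univ : Set X)) ∩ Δ) (((univ : Set X) ×ˢ S) ∩ Δ) := by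
    rw [Set.disjoint_left]
    rintro ⟨x, y⟩ ⟨⟨hx, -⟩, hxy⟩ ⟨⟨-, hy⟩, -⟩
    exact hx (hxy ▸ hy)
  have hmeas2 : MeasurableSet (((univ : Set X) ×ˢ S) ∩ Δ) :=
    (MeasurableSet.univ.prod hS).inter hΔ
  have hΔeq : γ Δ = μ Sᶜ + ν S := by
    rw [hunion, measure_union hdisj hmeas2, hA1, hA2]
  -- real versions
  set D := (γ Δ).toReal with hD
  have hcompl : (γ Δᶜ).toReal = 1 - D := by
    rw [prob_compl_eq_one_sub hΔ, ENNReal.toReal_sub_of_le prob_le_one (by simp)]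
    simp [hD]
  have hμSc : (μ Sᶜ).toReal = 1 - (μ S).toReal := by
    rw [prob_compl_eq_one_sub hS, ENNReal.toReal_sub_of_le prob_le_one (by simp)]
    simp
  have hDval : D = (1 - (μ S).toReal) + (ν S).toReal := by
    rw [hD, hΔeq, ENNReal.toReal_add (measure_ne_top _ _) (measure_ne_top _ _), hμSc]
  have hD1 : D ≤ 1 := by
    rw [hD]
    exact ENNReal.toReal_le_of_le_ofReal zero_le_one (by simpa using prob_le_one)
  -- key inequalities
  have key : ∀ A : Set X, MeasurableSet A →
      (μ A).toReal ≤ (ν A).toReal + (γ Δᶜ).toReal := by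
    intro A hA
    have hsub1 : (A ×ˢ (univ : Set X)) ∩ Δ ⊆ (univ : Set X) ×ˢ A := by
      rintro ⟨x, y⟩ ⟨⟨hx, -⟩, hxy⟩
      exact ⟨trivial, hxy ▸ hx⟩
    have hsub2 : (A ×ˢ (univ : Set X)) \ Δ ⊆ Δᶜ := fun p hp => hp.2
    have h := measure_inter_add_diff (μ := γ) (A ×ˢ (univ : Set X)) hΔ
    have hle : μ A ≤ ν A + γ Δᶜ := by
      rw [← hγ1 A hA, ← hγ2 A hA, ← h]
      exact add_le_add (measure_mono hsub1) (measure_mono hsub2)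
    have := ENNReal.toReal_mono (by finiteness) hle
    rwa [ENNReal.toReal_add (measure_ne_top _ _) (measure_ne_top _ _)] at this
  have key2 : ∀ A : Set X, MeasurableSet A →
      (ν A).toReal ≤ (μ A).toReal + (γ Δᶜ).toReal := by
    intro A hA
    have hsub1 : ((univ : Set X) ×ˢ A) ∩ Δ ⊆ A ×ˢ (univ : Set X) := by
      rintro ⟨x, y⟩ ⟨⟨-, hy⟩, hxy⟩
      exact ⟨hxy ▸ hy, trivial⟩
    have hsub2 : ((univ : Set X) ×ˢ A) \ Δ ⊆ Δᶜ := fun p hp => hp.2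
    have h := measure_inter_add_diff (μ := γ) ((univ : Set X) ×ˢ A) hΔ
    have hle : ν A ≤ μ A + γ Δᶜ := by
      rw [← hγ1 A hA, ← hγ2 A hA, ← h]
      exact add_le_add (measure_mono hsub1) (measure_mono hsub2)
    have := ENNReal.toReal_mono (by finiteness) hle
    rwa [ENNReal.toReal_add (measure_ne_top _ _) (measure_ne_top _ _)] at this
  have bound : ∀ A : {s : Set X // MeasurableSet s},
      |(μ A.1).toReal - (ν A.1).toReal| ≤ 1 - D := by
    intro A
    rw [abs_sub_le_iff]
    constructor
    · have := key A.1 A.2; rw [hcompl] at this; linarith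
    · have := key2 A.1 A.2; rw [hcompl] at this; linarith
  have htv : tvDist μ ν = 1 - D := by
    refine le_antisymm (ciSup_le bound) ?_
    have hle := le_ciSup (f := fun A : {s : Set X // MeasurableSet s} =>
      |(μ A.1).toReal - (ν A.1).toReal|) ⟨1 - D, fun x ⟨A, hA⟩ => hA ▸ bound A⟩ ⟨S, hS⟩
    have habs : |(μ S).toReal - (ν S).toReal| = 1 - D := by
      rw [abs_of_nonneg (by linarith)]
      linarith
    rw [habs] at hle
    exact hle
  rw [htv]
  ring
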